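/- Let X be a uniformly convex Banach space, X₁ ⊆ X₂ ⊆ ⋯ closed subspaces with dense union, and φ ∈ X* nonzero with φ not identically zero on X₁. Let x̂_n be the unique element of X_n with ‖x̂_n‖ = 1 and φ(x̂_n) = ‖φ‖_n := sup{|φ(x)| : x ∈ X_n, ‖x‖=1}, and let x̂ be the extremal element for φ over X. Then x̂_n → x̂ in norm. -/

import Mathlib

theorem subspace_extremal_approx
    {X : Type*} [NormedAddCommGroup X] [NormedSpace ℂ X]
    [UniformConvexSpace X] [CompleteSpace X]
    (Xn : ℕ → Submodule ℂ X) (hclosed : ∀ n, IsClosed ((Xn n : Set X)))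
    (hmono : Monotone Xn)
    (hdense : Dense (⋃ n, (Xn n : Set X)))
    (φ : X →L[ℂ] ℂ) (hφ : φ ≠ 0)
    (hφX1 : ∃ x ∈ Xn 0, φ x ≠ 0)
    (xhatn : ℕ → X) (xhat : X)
    (hxhatn : ∀ n, xhatn n ∈ Xn n ∧ ‖xhatn n‖ = 1 ∧
      φ (xhatn n) = ((sSup {r : ℝ | ∃ x ∈ Xn n, ‖x‖ = 1 ∧ ‖φ x‖ = r} : ℝ) : ℂ))
    (hxhat : ‖xhat‖ = 1 ∧ (φ xhat).re = ‖φ‖) :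
    Filter.Tendsto xhatn Filter.atTop (nhds xhat) := by
  classical
  set Sset : ℕ → Set ℝ := fun n => {r : ℝ | ∃ x ∈ Xn n, ‖x‖ = 1 ∧ ‖φ x‖ = r}
    with hSset
  set S : ℕ → ℝ := fun n => sSup (Sset n) with hS
  have hφpos : 0 < ‖φ‖ := norm_pos_iff.mpr hφ
  -- nonemptiness
  have hne : ∀ n, (Sset n).Nonempty := by
    intro n
    obtain ⟨x0, hx0, hx0φ⟩ := hφX1
    have hx0ne : x0 ≠ 0 := fun h => hx0φ (by simp [h])
    have hnorm : ‖x0‖ ≠ 0 := norm_ne_zero_iff.mpr hx0ne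
    refine ⟨‖φ ((‖x0‖⁻¹ : ℂ) • x0)‖, (‖x0‖⁻¹ : ℂ) • x0, ?_, ?_, rfl⟩
    · exact Submodule.smul_mem _ _ (hmono (Nat.zero_le n) hx0)
    · rw [norm_smul]
      simp [hnorm]
  have hbdd : ∀ n, ∀ r ∈ Sset n, r ≤ ‖φ‖ := by
    rintro n r ⟨x, hx, hx1, rfl⟩
    calc ‖φ x‖ = ‖φ x‖ := rfl
      _ ≤ ‖φ‖ * ‖x‖ := φ.le_opNorm x
      _ = ‖φ‖ := by rw [hx1, mul_one]
  have hSle : ∀ n, S n ≤ ‖φ‖ := fun n => Real.sSup_le (hbdd n) hφpos.le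
  have hS0 : ∀ n, 0 ≤ S n := by
    intro n
    apply Real.sSup_nonneg
    rintro r ⟨x, hx, hx1, rfl⟩
    exact norm_nonneg _
  have hSmono : Monotone S := by
    intro n m hnm
    apply csSup_le_csSup ⟨‖φ‖, hbdd m⟩ (hne n)
    rintro r ⟨x, hx, hx1, hr⟩
    exact ⟨x, hmono hnm hx, hx1, hr⟩
  -- the key lower bound
  have key : ∀ ε : ℝ, 0 < ε → ∃ N, ∀ n ≥ N, ‖φ‖ - ε < S n := by
    intro ε hε
    rcases lt_or_ge ‖φ‖ ε with h | h
    · exact ⟨0, fun n _ => lt_of_lt_of_le (by linarith [hS0 n]) le_rfl⟩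
    · set r := ‖φ‖ - ε / 2 with hrdef
      have hrpos : 0 < r := by simp only [hrdef]; linarith
      have hr : r < ‖φ‖ := by simp only [hrdef]; linarith
      obtain ⟨x, hx1, hxr⟩ := φ.exists_lt_apply_of_lt_opNorm hr
      set η : ℝ := min (1 - ‖x‖) ((‖φ x‖ - r) / ‖φ‖) with hη
      have hηpos : 0 < η := lt_min (by linarith) (div_pos (by linarith) hφpos)
      have hxcl : x ∈ closure (⋃ n, (Xn n : Set X)) := hdense x
      rw [Metric.mem_closure_iff] at hxcl
      obtain ⟨z, hzmem, hzx⟩ := hxcl η hηpos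
      obtain ⟨s, ⟨m, rfl⟩, hzm⟩ := hzmem
      have hzx' : ‖x - z‖ < η := by rwa [dist_eq_norm] at hzx
      have hz1 : ‖z‖ < 1 := by
        have : ‖z‖ ≤ ‖x‖ + ‖x - z‖ := by
          calc ‖z‖ = ‖x - (x - z)‖ := by rw [sub_sub_cancel]
            _ ≤ ‖x‖ + ‖x - z‖ := norm_sub_le _ _
        have h2 : ‖x - z‖ < 1 - ‖x‖ := lt_of_lt_of_le hzx' (min_le_left _ _)
        linarith
      have hφz : r < ‖φ z‖ := by
        have h1 : ‖φ x - φ z‖ ≤ ‖φ‖ * ‖x - z‖ := by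
          rw [← map_sub]; exact φ.le_opNorm _
        have h2 : ‖φ‖ * ‖x - z‖ < ‖φ‖ * η := by
          exact (mul_lt_mul_iff_right₀ hφpos).mpr hzx'
        have h3 : ‖φ‖ * η ≤ ‖φ x‖ - r := by
          have := min_le_right (1 - ‖x‖) ((‖φ x‖ - r) / ‖φ‖)
          calc ‖φ‖ * η ≤ ‖φ‖ * ((‖φ x‖ - r) / ‖φ‖) := by
                exact mul_le_mul_of_nonneg_left this hφpos.le
            _ = ‖φ x‖ - r := by field_simp
        have h4 : ‖φ x‖ - ‖φ z‖ ≤ ‖φ x - φ z‖ := by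
          have := norm_sub_norm_le (φ x) (φ z)
          linarith [this]
        linarith
      have hzne : z ≠ 0 := by
        intro h
        rw [h] at hφz; simp at hφz; linarith
      have hznorm : ‖z‖ ≠ 0 := norm_ne_zero_iff.mpr hzne
      have hznpos : 0 < ‖z‖ := norm_pos_iff.mpr hzne
      set u := (‖z‖⁻¹ : ℂ) • z with hu
      have humem : u ∈ Xn m := Submodule.smul_mem _ _ hzm
      have hunorm : ‖u‖ = 1 := by rw [hu, norm_smul]; simp [hznorm]
      have huval : r < ‖φ u‖ := by
        have : ‖φ u‖ = ‖z‖⁻¹ * ‖φ z‖ := by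
          rw [hu, map_smul]
          rw [norm_smul]
          simp
        rw [this]
        have hinv : 1 ≤ ‖z‖⁻¹ := by
          rw [le_inv_comm₀ one_pos hznpos]; simpa using hz1.le
        calc r < ‖φ z‖ := hφz
          _ = 1 * ‖φ z‖ := (one_mul _).symm
          _ ≤ ‖z‖⁻¹ * ‖φ z‖ := by
            exact mul_le_mul_of_nonneg_right hinv (norm_nonneg _)
      have hSm : r < S m := by
        have hmem : ‖φ u‖ ∈ Sset m := ⟨u, humem, hunorm, rfl⟩
        exact lt_of_lt_of_le huval (le_csSup ⟨‖φ‖, hbdd m⟩ hmem)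
      refine ⟨m, fun n hn => ?_⟩
      have : S m ≤ S n := hSmono hn
      simp only [hrdef] at hSm
      linarith
  -- S tends to ‖φ‖
  have hSlim : Filter.Tendsto S Filter.atTop (nhds ‖φ‖) := by
    rw [Metric.tendsto_atTop]
    intro ε hε
    obtain ⟨N, hN⟩ := key (ε / 2) (by linarith)
    refine ⟨N, fun n hn => ?_⟩
    rw [Real.dist_eq, abs_lt]
    constructor
    · have := hN n hn; linarith
    · have := hSle n; linarith
  -- real parts
  have hRe : ∀ n, (φ (xhatn n)).re = S n := by
    intro n
    rw [(hxhatn n).2.2]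
    exact Complex.ofReal_re _
  -- lower bound for the sum
  have hlow : ∀ n, (S n + ‖φ‖) / ‖φ‖ ≤ ‖xhatn n + xhat‖ := by
    intro n
    have h1 : (φ (xhatn n + xhat)).re = S n + ‖φ‖ := by
      rw [map_add, Complex.add_re, hRe n, hxhat.2]
    have h2 : (φ (xhatn n + xhat)).re ≤ ‖φ (xhatn n + xhat)‖ := by
      exact Complex.re_le_norm _
    have h3 : ‖φ (xhatn n + xhat)‖ ≤ ‖φ‖ * ‖xhatn n + xhat‖ := φ.le_opNorm _
    rw [div_le_iff₀ hφpos]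
    rw [h1] at h2
    linarith [mul_comm ‖φ‖ ‖xhatn n + xhat‖ ▸ h3]
  have hup : ∀ n, ‖xhatn n + xhat‖ ≤ 2 := by
    intro n
    calc ‖xhatn n + xhat‖ ≤ ‖xhatn n‖ + ‖xhat‖ := norm_add_le _ _
      _ = 2 := by rw [(hxhatn n).2.1, hxhat.1]; norm_num
  have hlowlim : Filter.Tendsto (fun n => (S n + ‖φ‖) / ‖φ‖) Filter.atTop (nhds 2) := by
    have : Filter.Tendsto (fun n => (S n + ‖φ‖) / ‖φ‖) Filter.atTop
        (nhds ((‖φ‖ + ‖φ‖) / ‖φ‖)) := by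
      exact Filter.Tendsto.div_const (hSlim.add tendsto_const_nhds) _
    convert this using 2
    field_simp
    ring
  have hsum : Filter.Tendsto (fun n => ‖xhatn n + xhat‖) Filter.atTop (nhds 2) := by
    exact tendsto_of_tendsto_of_tendsto_of_le_of_le hlowlim tendsto_const_nhds
      (fun n => hlow n) (fun n => hup n)
  -- conclude via uniform convexity
  rw [Metric.tendsto_atTop]
  intro ε hε
  obtain ⟨δ, hδ, hconv⟩ := exists_forall_sphere_dist_add_le_two_sub X hε
  have : ∀ᶠ n in Filter.atTop, 2 - δ < ‖xhatn n + xhat‖ := by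
    have := hsum (Ioi_mem_nhds (show (2:ℝ) - δ < 2 by linarith))
    simpa [Set.mem_Ioi] using this
  obtain ⟨N, hN⟩ := Filter.eventually_atTop.mp this
  refine ⟨N, fun n hn => ?_⟩
  rw [dist_eq_norm]
  by_contra hge
  push_neg at hge
  have := hconv (hxhatn n).2.1 hxhat.1 hge
  linarith [hN n hn]
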